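/- Let G = ∏_{p prime} GL₂(ℤ_p), the direct product over all primes p of the groups GL₂(ℤ_p), with the product topology. Then the topological closure of the commutator subgroup of G is a subgroup of index 2 in the subgroup ∏_{p prime} SL₂(ℤ_p) of G. -/

import Mathlib

instance (p : Nat.Primes) : Fact (p : ℕ).Prime := ⟨p.2⟩

/-- `GL₂(ℤ_p)`: the unit group of the ring of 2×2 matrices over the `p`-adic integers, with its
natural topology. -/
abbrev GL2Zp (p : Nat.Primes) : Type := (Matrix (Fin 2) (Fin 2) ℤ_[(p : ℕ)])ˣ

/-- `SL₂(ℤ_p)` as the subgroup of `GL₂(ℤ_p)` of elements of determinant `1`. -/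
noncomputable def SL2Zp (p : Nat.Primes) : Subgroup (GL2Zp p) :=
  (Units.map (Matrix.detMonoidHom : Matrix (Fin 2) (Fin 2) ℤ_[(p : ℕ)] →* ℤ_[(p : ℕ)])).ker


open scoped commutatorElement

section Elem
variable {R : Type*} [CommRing R]
open Matrix
abbrev M2 (R : Type*) [CommRing R] := Matrix (Fin 2) (Fin 2) R

def e12 (x : R) : (M2 R)ˣ :=
  ⟨!![1, x; 0, 1], !![1, -x; 0, 1], by simp [Matrix.mul_fin_two, Matrix.one_fin_two], by
    simp [Matrix.mul_fin_two, Matrix.one_fin_two]⟩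

def e21 (x : R) : (M2 R)ˣ :=
  ⟨!![1, 0; x, 1], !![1, 0; -x, 1], by simp [Matrix.mul_fin_two, Matrix.one_fin_two], by
    simp [Matrix.mul_fin_two, Matrix.one_fin_two]⟩

def sw : (M2 R)ˣ :=
  ⟨!![0, 1; 1, 0], !![0, 1; 1, 0], by simp [Matrix.mul_fin_two, Matrix.one_fin_two], by
    simp [Matrix.mul_fin_two, Matrix.one_fin_two]⟩

def du (u : Rˣ) : (M2 R)ˣ :=
  ⟨!![(u:R), 0; 0, 1], !![((u⁻¹:Rˣ):R), 0; 0, 1], by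
    simp [Matrix.mul_fin_two, Matrix.one_fin_two], by
    simp [Matrix.mul_fin_two, Matrix.one_fin_two]⟩

def dd (u : Rˣ) : (M2 R)ˣ :=
  ⟨!![(u:R), 0; 0, ((u⁻¹:Rˣ):R)], !![((u⁻¹:Rˣ):R), 0; 0, (u:R)], by
    simp [Matrix.mul_fin_two, Matrix.one_fin_two], by
    simp [Matrix.mul_fin_two, Matrix.one_fin_two]⟩

lemma comm_du_e12 (u : Rˣ) (y : R) : ⁅du u, e12 y⁆ = e12 (((u:R) - 1) * y) := by
  rw [commutatorElement_def]
  ext : 1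
  show (du u).val * (e12 y).val * (du u)⁻¹.val * (e12 y)⁻¹.val = _
  simp only [du, e12, Units.inv_mk]
  simp [Matrix.mul_fin_two]
  rw [show -y + (u:R)*y = ((u:R)-1)*y by ring]

lemma comm_du_sw (u : Rˣ) : ⁅du u, (sw : (M2 R)ˣ)⁆ = dd u := by
  rw [commutatorElement_def]
  ext : 1
  show (du u).val * sw.val * (du u)⁻¹.val * (sw)⁻¹.val = _
  simp only [du, sw, dd, Units.inv_mk]
  simp [Matrix.mul_fin_two]

lemma decomp (g : (M2 R)ˣ) (hdet : g.val.det = 1) (ha : IsUnit (g.val 0 0)) :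
    g = e21 (g.val 1 0 * ((ha.unit⁻¹ : Rˣ) : R)) * dd ha.unit *
      e12 (((ha.unit⁻¹ : Rˣ) : R) * g.val 0 1) := by
  have hu : (ha.unit : R) = g.val 0 0 := ha.unit_spec
  have hui : ((ha.unit⁻¹ : Rˣ) : R) * g.val 0 0 = 1 := ha.val_inv_mul
  have hdet2 : g.val 0 0 * g.val 1 1 - g.val 0 1 * g.val 1 0 = 1 := by
    rw [← hdet, Matrix.det_fin_two]
  ext i j
  show g.val i j = _
  rw [e21, dd, e12]
  fin_cases i <;> fin_cases j <;>
    simp [Matrix.mul_apply, Fin.sum_univ_two, hu]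
  · linear_combination (- g.val 0 1) * hui
  · linear_combination (- g.val 1 0) * hui
  · linear_combination (-(g.val 1 1 + ((ha.unit⁻¹ : Rˣ) : R) * g.val 0 1 * g.val 1 0)) * hui +
      ((ha.unit⁻¹ : Rˣ) : R) * hdet2

end Elem

section Padic
open Matrix
variable {p : ℕ} [Fact p.Prime]

lemma padic_isUnit_iff (x : ℤ_[p]) : IsUnit x ↔ PadicInt.toZMod x ≠ 0 := by
  rw [Ne, ← RingHom.mem_ker, PadicInt.ker_toZMod, IsLocalRing.mem_maximalIdeal, mem_nonunits_iff,
    not_not]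

lemma padic_two_unit (hp : p ≠ 2) : IsUnit (2 : ℤ_[p]) := by
  rw [padic_isUnit_iff]
  rw [map_ofNat]
  intro h
  have := (ZMod.natCast_eq_zero_iff 2 p).mp (by exact_mod_cast h)
  exact hp ((Nat.prime_dvd_prime_iff_eq Fact.out Nat.prime_two).mp this)

lemma dd_mem (u : ℤ_[p]ˣ) : dd u ∈ commutator (M2 ℤ_[p])ˣ := by
  rw [commutator_def, ← comm_du_sw u]
  exact Subgroup.commutator_mem_commutator (Subgroup.mem_top _) (Subgroup.mem_top _)

lemma sw_conj_e12 (x : ℤ_[p]) : sw * e12 x * sw⁻¹ = e21 x := by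
  ext : 1
  show sw.val * (e12 x).val * (sw⁻¹).val = _
  rw [sw, e12, e21]
  show _ * _ * (sw : (M2 ℤ_[p])ˣ).inv = _
  rw [sw]
  simp [Matrix.mul_fin_two]

lemma e12_comm_eq (y : ℤ_[p]) : ⁅du (-1 : ℤ_[p]ˣ), e12 (-y)⁆ = e12 (2 * y) := by
  rw [comm_du_e12]
  congr 1
  simp
  ring

lemma e12_mem_odd (hp : p ≠ 2) (x : ℤ_[p]) : e12 x ∈ commutator (M2 ℤ_[p])ˣ := by
  have h2 := padic_two_unit hp
  have key : 2 * (((h2.unit⁻¹ : ℤ_[p]ˣ) : ℤ_[p]) * x) = x := by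
    rw [← mul_assoc, mul_comm (2:ℤ_[p]), h2.val_inv_mul, one_mul]
  rw [← key, ← e12_comm_eq, commutator_def]
  exact Subgroup.commutator_mem_commutator (Subgroup.mem_top _) (Subgroup.mem_top _)

lemma e12_mem_two (x : ℤ_[p]) (hx : PadicInt.toZMod x = 0) :
    e12 x ∈ commutator (M2 ℤ_[p])ˣ := by
  have : x ∈ Ideal.span {(p : ℤ_[p])} := by
    rw [← PadicInt.maximalIdeal_eq_span_p, ← PadicInt.ker_toZMod, RingHom.mem_ker]
    exact hx
  obtain ⟨y, hy⟩ := Ideal.mem_span_singleton'.mp this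
  by_cases hp : p = 2
  · subst hp
    rw [← hy, show (((2:ℕ) : ℤ_[2])) = (2 : ℤ_[2]) by norm_num, mul_comm, ← e12_comm_eq,
      commutator_def]
    exact Subgroup.commutator_mem_commutator (Subgroup.mem_top _) (Subgroup.mem_top _)
  · exact e12_mem_odd hp x

lemma e21_mem_of_e12 (x : ℤ_[p]) (h : e12 x ∈ commutator (M2 ℤ_[p])ˣ) :
    e21 x ∈ commutator (M2 ℤ_[p])ˣ := by
  rw [← sw_conj_e12]
  exact Subgroup.Normal.conj_mem (by rw [commutator_def]; exact Subgroup.commutator_normal ⊤ ⊤) _ h sw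

end Padic

section Two
open Matrix

abbrev F2M := Matrix (Fin 2) (Fin 2) (ZMod 2)

def sgn2 : F2Mˣ →* ℤˣ where
  toFun g := if g.val.trace = 0 ∧ g ≠ 1 then -1 else 1
  map_one' := by decide
  map_mul' := by decide

noncomputable def red2 : (M2 ℤ_[2])ˣ →* F2Mˣ :=
  Units.map (PadicInt.toZMod.mapMatrix : M2 ℤ_[2] →+* F2M).toMonoidHom

noncomputable def phi2 : (M2 ℤ_[2])ˣ →* ℤˣ := sgn2.comp red2

def Aunit : F2Mˣ := ⟨!![0,1;1,1], !![1,1;1,0], by decide, by decide⟩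

lemma sgn2_classify (x : F2Mˣ) (hx : sgn2 x = 1) : x = 1 ∨ x = Aunit ∨ x = Aunit * Aunit := by
  revert hx; revert x; decide

noncomputable def wu : (M2 ℤ_[2])ˣ := ⟨!![0,-1;1,-1], !![-1,1;-1,0], by
  simp [Matrix.mul_fin_two, Matrix.one_fin_two], by
  simp [Matrix.mul_fin_two, Matrix.one_fin_two]⟩

lemma red2_val (g : (M2 ℤ_[2])ˣ) : (red2 g).val = g.val.map PadicInt.toZMod := by
  simp [red2, RingHom.mapMatrix_apply]

lemma red2_wu : red2 wu = Aunit := by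
  ext : 1
  rw [red2_val, Aunit]
  show (wu.val).map _ = _
  rw [wu]
  ext i j
  fin_cases i <;> fin_cases j <;> simp <;> decide

lemma red2_sw : red2 (sw : (M2 ℤ_[2])ˣ) = sw := by
  ext : 1
  rw [red2_val]
  show (Units.val (sw : (M2 ℤ_[2])ˣ)).map _ = Units.val (sw : F2Mˣ)
  rw [sw, sw]
  ext i j
  fin_cases i <;> fin_cases j <;> simp

lemma phi2_e12_one : phi2 (e12 (1 : ℤ_[2])) = -1 := by
  have h : red2 (e12 (1:ℤ_[2])) = e12 (1 : ZMod 2) := by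
    ext : 1
    rw [red2_val]
    show (Units.val (e12 (1:ℤ_[2]))).map _ = Units.val (e12 (1 : ZMod 2))
    rw [e12, e12]
    ext i j
    fin_cases i <;> fin_cases j <;> simp
  rw [phi2, MonoidHom.comp_apply, h]
  decide

end Two

section PerPrime
open Matrix
variable {p : ℕ} [Fact p.Prime]

noncomputable abbrev DET (p : ℕ) [Fact p.Prime] : (M2 ℤ_[p])ˣ →* ℤ_[p]ˣ :=
  Units.map (Matrix.detMonoidHom : M2 ℤ_[p] →* ℤ_[p])

lemma det_of_mem_ker {g : (M2 ℤ_[p])ˣ} (hg : g ∈ (DET p).ker) : g.val.det = 1 := by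
  have := congrArg Units.val (MonoidHom.mem_ker.mp hg)
  simpa using this

lemma mem_ker_of_det {g : (M2 ℤ_[p])ˣ} (hg : g.val.det = 1) : g ∈ (DET p).ker := by
  rw [MonoidHom.mem_ker]
  ext
  simpa using hg

lemma unit_entry_of_det {g : (M2 ℤ_[p])ˣ} (hg : g.val.det = 1) (ha : ¬ IsUnit (g.val 0 0)) :
    IsUnit (g.val 1 0) := by
  by_contra hc
  have hdet2 : g.val 0 0 * g.val 1 1 - g.val 0 1 * g.val 1 0 = 1 := by
    rw [← hg, Matrix.det_fin_two]
  have h1 : (1 : ℤ_[p]) ∈ IsLocalRing.maximalIdeal ℤ_[p] := by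
    rw [← hdet2]
    exact Ideal.sub_mem _
      (Ideal.mul_mem_right _ _ ((IsLocalRing.mem_maximalIdeal _).mpr (mem_nonunits_iff.mpr ha)))
      (Ideal.mul_mem_left _ _ ((IsLocalRing.mem_maximalIdeal _).mpr (mem_nonunits_iff.mpr hc)))
  exact (Ideal.ne_top_iff_one _).mp (IsLocalRing.maximalIdeal.isMaximal ℤ_[p]).ne_top h1

/-- w0 = e12(-1) * e21(1) * e12(-1), with value !![0,-1;1,0]. -/
noncomputable def w0 : (M2 ℤ_[p])ˣ := e12 (-1) * e21 1 * e12 (-1)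

lemma w0_val : (w0 : (M2 ℤ_[p])ˣ).val = !![0,-1;1,0] := by
  show (e12 (-1)).val * (e21 1).val * (e12 (-1)).val = _
  rw [e12, e21]
  simp [Matrix.mul_fin_two]

lemma comm_eq_odd (hp : p ≠ 2) :
    commutator (M2 ℤ_[p])ˣ = (DET p).ker := by
  apply le_antisymm (Abelianization.commutator_subset_ker (DET p))
  have main : ∀ g : (M2 ℤ_[p])ˣ, g.val.det = 1 → IsUnit (g.val 0 0) →
      g ∈ commutator (M2 ℤ_[p])ˣ := by
    intro g hdet ha
    rw [decomp g hdet ha]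
    exact mul_mem (mul_mem (e21_mem_of_e12 _ (e12_mem_odd hp _)) (dd_mem _)) (e12_mem_odd hp _)
  intro g hg
  have hdet := det_of_mem_ker hg
  by_cases ha : IsUnit (g.val 0 0)
  · exact main g hdet ha
  · have hw0 : (w0 : (M2 ℤ_[p])ˣ) ∈ commutator (M2 ℤ_[p])ˣ :=
      mul_mem (mul_mem (e12_mem_odd hp _) (e21_mem_of_e12 _ (e12_mem_odd hp _))) (e12_mem_odd hp _)
    have hg' : (w0 * g) ∈ commutator (M2 ℤ_[p])ˣ := by
      apply main
      · rw [Units.val_mul, Matrix.det_mul, w0_val]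
        simp [hdet, Matrix.det_fin_two]
      · rw [Units.val_mul, w0_val]
        have h5 : ((!![0,-1;1,0] : M2 ℤ_[p]) * g.val) 0 0 = -(g.val 1 0) := by
          simp [Matrix.mul_apply, Fin.sum_univ_two]
        rw [h5]
        exact (unit_entry_of_det hdet ha).neg
    have : g = w0⁻¹ * (w0 * g) := by group
    rw [this]
    exact mul_mem (inv_mem hw0) hg'
end PerPrime

section TwoMain
open Matrix

lemma gamma_mem (g : (M2 ℤ_[2])ˣ) (hdet : g.val.det = 1) (hred : red2 g = 1) :
    g ∈ commutator (M2 ℤ_[2])ˣ := by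
  have hent : ∀ i j, PadicInt.toZMod (g.val i j) = (1 : F2M) i j := by
    intro i j
    have := congrArg Units.val hred
    rw [red2_val] at this
    exact congrFun (congrFun this i) j
  have ha : IsUnit (g.val 0 0) := by
    rw [padic_isUnit_iff, hent 0 0]
    simp [Matrix.one_apply]
  rw [decomp g hdet ha]
  refine mul_mem (mul_mem (e21_mem_of_e12 _ (e12_mem_two _ ?_)) (dd_mem _)) (e12_mem_two _ ?_)
  · rw [_root_.map_mul, hent 1 0]
    simp [Matrix.one_apply]
  · rw [_root_.map_mul, hent 0 1]
    simp [Matrix.one_apply]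

lemma wu_mem : wu ∈ commutator (M2 ℤ_[2])ˣ := by
  have hc : ⁅(sw : (M2 ℤ_[2])ˣ), wu⁆ ∈ commutator (M2 ℤ_[2])ˣ :=
    Subgroup.commutator_mem_commutator (Subgroup.mem_top _) (Subgroup.mem_top _)
  have hγ : ⁅(sw : (M2 ℤ_[2])ˣ), wu⁆⁻¹ * wu ∈ commutator (M2 ℤ_[2])ˣ := by
    apply gamma_mem
    · apply det_of_mem_ker
      refine mul_mem (inv_mem ?_) (mem_ker_of_det ?_)
      · exact Abelianization.commutator_subset_ker (DET 2) hc
      · rw [wu]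
        simp [Matrix.det_fin_two_of]
    · rw [_root_.map_mul, map_inv, map_commutatorElement, red2_sw, red2_wu]
      decide
  have : wu = ⁅(sw : (M2 ℤ_[2])ˣ), wu⁆ * (⁅(sw : (M2 ℤ_[2])ˣ), wu⁆⁻¹ * wu) := by group
  rw [this]
  exact mul_mem hc hγ

lemma comm_eq_two : commutator (M2 ℤ_[2])ˣ = (DET 2).ker ⊓ phi2.ker := by
  apply le_antisymm
  · exact le_inf (Abelianization.commutator_subset_ker _) (Abelianization.commutator_subset_ker _)
  rintro g ⟨hg1, hg2⟩
  have hdet := det_of_mem_ker hg1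
  have hwdet : (wu.val).det = 1 := by rw [wu]; simp [Matrix.det_fin_two_of]
  have hsgn : sgn2 (red2 g) = 1 := hg2
  rcases sgn2_classify _ hsgn with h | h | h
  · exact gamma_mem g hdet h
  · have h2 : wu⁻¹ * g ∈ commutator (M2 ℤ_[2])ˣ := by
      apply gamma_mem
      · apply det_of_mem_ker
        exact mul_mem (inv_mem (mem_ker_of_det hwdet)) hg1
      · rw [_root_.map_mul, map_inv, red2_wu, h]
        group
    have : g = wu * (wu⁻¹ * g) := by group
    rw [this]
    exact mul_mem wu_mem h2
  · have h2 : wu⁻¹ * (wu⁻¹ * g) ∈ commutator (M2 ℤ_[2])ˣ := by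
      apply gamma_mem
      · apply det_of_mem_ker
        exact mul_mem (inv_mem (mem_ker_of_det hwdet))
          (mul_mem (inv_mem (mem_ker_of_det hwdet)) hg1)
      · rw [_root_.map_mul, _root_.map_mul, map_inv, red2_wu, h]
        group
    have : g = wu * (wu * (wu⁻¹ * (wu⁻¹ * g))) := by group
    rw [this]
    exact mul_mem wu_mem (mul_mem wu_mem h2)

end TwoMain

section Topo
open Matrix
variable {p : ℕ} [Fact p.Prime]

lemma toZMod_loc_const {x y : ℤ_[p]} (h : ‖x - y‖ < 1) :
    PadicInt.toZMod x = PadicInt.toZMod y := by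
  have hm : x - y ∈ IsLocalRing.maximalIdeal ℤ_[p] :=
    (IsLocalRing.mem_maximalIdeal _).mpr (PadicInt.mem_nonunits.mpr h)
  have : PadicInt.toZMod (x - y) = 0 := by
    rw [← RingHom.mem_ker, PadicInt.ker_toZMod]; exact hm
  rw [map_sub] at this
  exact sub_eq_zero.mp this

lemma toZMod_fiber_closed (c : ZMod p) : IsClosed {x : ℤ_[p] | PadicInt.toZMod x = c} := by
  rw [← isOpen_compl_iff]
  rw [Metric.isOpen_iff]
  intro x hx
  refine ⟨1, one_pos, fun y hy => ?_⟩
  have : ‖y - x‖ < 1 := by rwa [Metric.mem_ball, dist_eq_norm] at hy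
  intro hc
  exact hx ((toZMod_loc_const this).symm.trans hc)

lemma entry_continuous (i j : Fin 2) :
    Continuous (fun g : (M2 ℤ_[p])ˣ => g.val i j) := by
  have h : Continuous (Units.val : (M2 ℤ_[p])ˣ → M2 ℤ_[p]) := Units.continuous_val
  exact (continuous_apply j).comp ((continuous_apply i).comp h)

lemma det_ker_closed : IsClosed ((DET p).ker : Set (M2 ℤ_[p])ˣ) := by
  have hcont : Continuous (DET p) := by
    rw [Units.continuous_iff]
    constructor
    · exact (Units.continuous_val :
        Continuous (Units.val : (M2 ℤ_[p])ˣ → M2 ℤ_[p])).matrix_det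
    · have h9 : (fun g : (M2 ℤ_[p])ˣ => Units.val ((DET p g)⁻¹)) =
          fun g : (M2 ℤ_[p])ˣ => (Units.val (g⁻¹)).det := by
        funext g
        rw [← map_inv (DET p) g]
        rfl
      show Continuous fun g : (M2 ℤ_[p])ˣ => Units.val ((DET p g)⁻¹)
      rw [h9]
      exact (Units.continuous_coe_inv :
        Continuous (fun g : (M2 ℤ_[p])ˣ => Units.val g⁻¹)).matrix_det
  have : ((DET p).ker : Set (M2 ℤ_[p])ˣ) = (DET p) ⁻¹' {1} := rfl
  rw [this]
  exact IsClosed.preimage hcont isClosed_singleton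

lemma red2_fiber_closed (t : F2Mˣ) : IsClosed {g : (M2 ℤ_[2])ˣ | red2 g = t} := by
  have : {g : (M2 ℤ_[2])ˣ | red2 g = t} =
      ⋂ i, ⋂ j, {g : (M2 ℤ_[2])ˣ | PadicInt.toZMod (g.val i j) = t.val i j} := by
    ext g
    simp only [Set.mem_setOf_eq, Set.mem_iInter, Units.ext_iff, red2_val, ← Matrix.ext_iff,
      Matrix.map_apply]
  rw [this]
  exact isClosed_iInter fun i => isClosed_iInter fun j =>
    (toZMod_fiber_closed (t.val i j)).preimage (entry_continuous i j)

lemma phi2_ker_closed : IsClosed (phi2.ker : Set (M2 ℤ_[2])ˣ) := by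
  have : (phi2.ker : Set (M2 ℤ_[2])ˣ) =
      ⋃ (t : F2Mˣ), ⋃ (_ : sgn2 t = 1), {g : (M2 ℤ_[2])ˣ | red2 g = t} := by
    ext g
    simp only [SetLike.mem_coe, MonoidHom.mem_ker, Set.mem_iUnion, Set.mem_setOf_eq]
    constructor
    · intro h; exact ⟨red2 g, h, rfl⟩
    · rintro ⟨t, ht, h⟩; rw [phi2, MonoidHom.comp_apply, h]; exact ht
  rw [this]
  exact isClosed_iUnion_of_finite fun t => isClosed_iUnion_of_finite fun _ => red2_fiber_closed t

end Topo

section Glue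
open Matrix

def two : Nat.Primes := ⟨2, Nat.prime_two⟩

noncomputable def phip (p : Nat.Primes) : GL2Zp p →* ℤˣ :=
  if h : p = two then h.symm ▸ (phi2 : GL2Zp two →* ℤˣ) else 1

lemma phip_two : phip two = (phi2 : GL2Zp two →* ℤˣ) := by rw [phip, dif_pos rfl]

lemma phip_ne {p : Nat.Primes} (h : p ≠ two) : phip p = 1 := dif_neg h

noncomputable def Kp (p : Nat.Primes) : Subgroup (GL2Zp p) := SL2Zp p ⊓ (phip p).ker

lemma SL2Zp_eq (p : Nat.Primes) : SL2Zp p = (DET (p : ℕ)).ker := rfl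

lemma comm_eq_Kp (p : Nat.Primes) : commutator (GL2Zp p) = Kp p := by
  by_cases h : p = two
  · subst h
    rw [Kp, phip_two, SL2Zp_eq]
    exact comm_eq_two
  · rw [Kp, phip_ne h, MonoidHom.ker_one, inf_top_eq, SL2Zp_eq]
    exact comm_eq_odd (fun hh => h (Subtype.ext hh))

lemma Kp_closed (p : Nat.Primes) : IsClosed (Kp p : Set (GL2Zp p)) := by
  by_cases h : p = two
  · subst h
    rw [Kp, phip_two, SL2Zp_eq, Subgroup.coe_inf]
    exact det_ker_closed.inter phi2_ker_closed
  · rw [Kp, phip_ne h, MonoidHom.ker_one, inf_top_eq, SL2Zp_eq]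
    exact det_ker_closed

lemma single_mem_comm (q : Nat.Primes) (x : GL2Zp q) (hx : x ∈ commutator (GL2Zp q)) :
    Pi.mulSingle q x ∈ commutator (∀ p : Nat.Primes, GL2Zp p) := by
  have h1 : (Pi.mulSingle q x : ∀ p, GL2Zp p) ∈
      (commutator (GL2Zp q)).map (MonoidHom.mulSingle (fun p => GL2Zp p) q) := by
    rw [← MonoidHom.mulSingle_apply]
    exact Subgroup.mem_map_of_mem _ hx
  rw [commutator_def, Subgroup.map_commutator] at h1
  rw [commutator_def]
  exact Subgroup.commutator_mono le_top le_top h1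

lemma closure_eq_piKp :
    (commutator (∀ p : Nat.Primes, GL2Zp p)).topologicalClosure = Subgroup.pi Set.univ Kp := by
  apply le_antisymm
  · apply Subgroup.topologicalClosure_minimal
    · rw [commutator_def, ← Subgroup.pi_top Set.univ]
      refine le_trans (Subgroup.commutator_pi_pi_le _ _) ?_
      intro g hg
      rw [Subgroup.mem_pi] at hg ⊢
      intro i hi
      rw [← comm_eq_Kp i, commutator_def]
      exact hg i hi
    · have h : (Subgroup.pi Set.univ Kp : Set (∀ p, GL2Zp p)) =
          Set.pi Set.univ (fun p => (Kp p : Set (GL2Zp p))) := by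
        ext g
        simp only [SetLike.mem_coe, Subgroup.mem_pi, Set.mem_pi]
      rw [h]
      exact isClosed_set_pi (fun i _ => Kp_closed i)
  · intro g hg
    rw [Subgroup.mem_pi] at hg
    apply mem_closure_iff.mpr
    intro o ho hgo
    obtain ⟨I, u, hIu, hsub⟩ := isOpen_pi_iff.mp ho g hgo
    refine ⟨fun p => if p ∈ I then g p else 1, hsub fun a ha => ?_, ?_⟩
    · show (if a ∈ I then g a else 1) ∈ u a
      rw [if_pos (Finset.mem_coe.mp ha)]
      exact (hIu a (Finset.mem_coe.mp ha)).2
    · have claim : ∀ J : Finset Nat.Primes, (∀ q ∈ J, g q ∈ commutator (GL2Zp q)) →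
          (fun p => if p ∈ J then g p else 1) ∈ commutator (∀ p : Nat.Primes, GL2Zp p) := by
        intro J
        induction J using Finset.induction_on with
        | empty => intro _; simp only [Finset.notMem_empty, if_false]; exact one_mem _
        | @insert a J ha ih =>
          intro hJ
          have hfun : (fun p => if p ∈ insert a J then g p else 1) =
              Pi.mulSingle a (g a) * (fun p => if p ∈ J then g p else 1) := by
            funext p
            by_cases hp : p = a
            · subst hp
              simp [Pi.mulSingle_eq_same, ha]
            · simp [Pi.mulSingle_eq_of_ne hp, Finset.mem_insert, hp]
          rw [hfun]
          exact mul_mem (single_mem_comm a (g a) (hJ a (Finset.mem_insert_self a J)))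
            (ih fun q hq => hJ q (Finset.mem_insert_of_mem hq))
      exact SetLike.mem_coe.mpr (claim I fun q _ => by rw [comm_eq_Kp q]; exact hg q trivial)

end Glue

/-- In `G = ∏_{p prime} GL₂(ℤ_p)`, the closure of the commutator subgroup is a subgroup of
index `2` in `∏_{p prime} SL₂(ℤ_p)`. -/
theorem closure_commutator_index_two_in_sl2 :
    (commutator (∀ p : Nat.Primes, GL2Zp p)).topologicalClosure ≤
        Subgroup.pi Set.univ (fun p : Nat.Primes => SL2Zp p) ∧
      ((commutator (∀ p : Nat.Primes, GL2Zp p)).topologicalClosure).relIndex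
        (Subgroup.pi Set.univ (fun p : Nat.Primes => SL2Zp p)) = 2 := by
  constructor
  · rw [closure_eq_piKp]
    intro g hg
    rw [Subgroup.mem_pi] at hg ⊢
    intro i hi
    exact (hg i hi).1
  · rw [closure_eq_piKp]
    set SLP := Subgroup.pi Set.univ (fun p : Nat.Primes => SL2Zp p) with hSLP
    let f : ↥SLP →* ℤˣ :=
      (phip two).comp ((Pi.evalMonoidHom (fun p => GL2Zp p) two).comp SLP.subtype)
    have hfapp : ∀ g : ↥SLP, f g = phip two ((g : ∀ p, GL2Zp p) two) := fun g => rfl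
    have hker : (Subgroup.pi Set.univ Kp).subgroupOf SLP = f.ker := by
      ext g
      rw [Subgroup.mem_subgroupOf, Subgroup.mem_pi, MonoidHom.mem_ker, hfapp]
      constructor
      · intro h
        exact (h two trivial).2
      · intro h i _
        refine ⟨(Subgroup.mem_pi Set.univ).mp g.2 i trivial, ?_⟩
        by_cases hi : i = two
        · subst hi
          exact h
        · show (g : ∀ p, GL2Zp p) i ∈ (phip i).ker
          simp [MonoidHom.mem_ker, phip_ne hi]
    rw [Subgroup.relIndex, hker, Subgroup.index_ker]
    have hsurj : Function.Surjective f := by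
      intro u
      rcases Int.units_eq_one_or u with hu | hu
      · exact ⟨1, by rw [map_one, hu]⟩
      · have hE : (Pi.mulSingle two (e12 (1 : ℤ_[2])) : ∀ p, GL2Zp p) ∈ SLP := by
          rw [hSLP, Subgroup.mem_pi]
          intro i _
          by_cases hi : i = two
          · subst hi
            rw [Pi.mulSingle_eq_same, SL2Zp_eq]
            apply mem_ker_of_det
            unfold e12
            erw [Matrix.det_fin_two_of]
            simp
            exact mul_zero _
          · rw [Pi.mulSingle_eq_of_ne hi]
            exact one_mem _
        refine ⟨⟨_, hE⟩, ?_⟩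
        rw [hfapp]
        show phip two (Pi.mulSingle two (e12 (1 : ℤ_[2])) two) = u
        erw [Pi.mulSingle_eq_same]
        rw [phip_two, hu]
        exact phi2_e12_one
    rw [(MonoidHom.range_eq_top).mpr hsurj, Subgroup.card_top]
    simp [Nat.card_eq_fintype_card]
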